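/- For all m, n ≥ 0, the Gaussian binomial coefficient [m+n choose m]_q = [m+n]!/([m]![n]!) is a polynomial in q of degree mn whose coefficient sequence is symmetric (palindromic) and unimodal. -/

import Mathlib

open Polynomial

namespace SepPerm

/-- The length (number of inversions) of a permutation of `Fin n`. -/
def invCount {n : ℕ} (π : Equiv.Perm (Fin n)) : ℕ :=
  (Finset.univ.filter fun p : Fin n × Fin n => p.1 < p.2 ∧ π p.2 < π p.1).card

/-- The (right) weak Bruhat order: `u ≤ v` iff `ℓ(u) + ℓ(u⁻¹v) = ℓ(v)`. -/
def wle {n : ℕ} (u v : Equiv.Perm (Fin n)) : Prop :=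
  invCount u + invCount (u⁻¹ * v) = invCount v

open scoped Classical in
/-- `F(Λ_π, q) = ∑_{u ≤ π} q^{ℓ(u)}`, rank generating function of `[id, π]`. -/
noncomputable def FLam {n : ℕ} (π : Equiv.Perm (Fin n)) : Polynomial ℤ :=
  ∑ u ∈ Finset.univ.filter (fun u => wle u π), X ^ invCount u

open scoped Classical in
/-- `F(V_π, q) = ∑_{v ≥ π} q^{ℓ(v) - ℓ(π)}`, rank generating function of `[π, w₀]`. -/
noncomputable def FV {n : ℕ} (π : Equiv.Perm (Fin n)) : Polynomial ℤ :=
  ∑ v ∈ Finset.univ.filter (fun v => wle π v), X ^ (invCount v - invCount π)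

/-- A permutation is separable iff it avoids the patterns 3142 and 2413. -/
def IsSeparable {n : ℕ} (π : Equiv.Perm (Fin n)) : Prop :=
  (¬ ∃ i j k h : Fin n, i < j ∧ j < k ∧ k < h ∧
      π j < π h ∧ π h < π i ∧ π i < π k) ∧
  (¬ ∃ i j k h : Fin n, i < j ∧ j < k ∧ k < h ∧
      π k < π i ∧ π i < π h ∧ π h < π j)

/-- The longest element `w₀ = n, n-1, …, 1`. -/
def w0 (n : ℕ) : Equiv.Perm (Fin n) := Fin.revPerm

/-- The complement `π^c`, with `π^c(i) = n + 1 - π(i)` (one-indexed). -/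
def compl {n : ℕ} (π : Equiv.Perm (Fin n)) : Equiv.Perm (Fin n) := w0 n * π

/-- `[k] = 1 + q + ⋯ + q^{k-1}`. -/
noncomputable def qnum (k : ℕ) : Polynomial ℤ := ∑ i ∈ Finset.range k, X ^ i

/-- `[N]! = [1][2]⋯[N]`. -/
noncomputable def qfact (N : ℕ) : Polynomial ℤ := ∏ k ∈ Finset.range N, qnum (k + 1)

/-- The inversion poset `P_π` on the letters: `x ≤_P y` iff `x ≤ y` and `π⁻¹x ≤ π⁻¹y`. -/
def invLe {n : ℕ} (π : Equiv.Perm (Fin n)) (x y : Fin n) : Prop :=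
  x ≤ y ∧ π⁻¹ x ≤ π⁻¹ y

/-- `σ` is a linear extension of the order `r`: whenever `i <_r j`, `i` precedes `j`
in the one-line notation of `σ` (i.e. the position `σ⁻¹ i` comes before `σ⁻¹ j`). -/
def IsLinExt {N : ℕ} (r : Fin N → Fin N → Prop) (σ : Equiv.Perm (Fin N)) : Prop :=
  ∀ i j, r i j → i ≠ j → σ.symm i < σ.symm j

open scoped Classical in
/-- `F(𝓛(P), q) = ∑_{σ ∈ 𝓛(P)} q^{ℓ(σ)}`, generating function of linear extensions
by number of inversions. -/
noncomputable def FLin {N : ℕ} (r : Fin N → Fin N → Prop) : Polynomial ℤ :=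
  ∑ σ ∈ Finset.univ.filter (fun σ => IsLinExt r σ), X ^ invCount σ


open Finset


def Tm (m : ℕ) : ℕ := ∑ i ∈ range m, i

noncomputable def Gt (m N : ℕ) : Polynomial ℤ :=
  ∑ S ∈ (range N).powersetCard m, X ^ (∑ i ∈ S, i)

noncomputable def Cpoly (m n : ℕ) : Polynomial ℤ :=
  ∑ S ∈ (range (m + n)).powersetCard m, X ^ (∑ i ∈ S, i - Tm m)

lemma Tm_le_sum {S : Finset ℕ} {m : ℕ} (h : S.card = m) : Tm m ≤ ∑ i ∈ S, i := by
  induction m generalizing S with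
  | zero => simp [Tm]
  | succ m ih =>
    have hne : S.Nonempty := by
      rw [← Finset.card_pos, h]; omega
    set M := S.max' hne with hM
    have hMem : M ∈ S := S.max'_mem hne
    have hsub : S ⊆ range (M + 1) := by
      intro x hx
      simp only [mem_range]
      have := S.le_max' x hx
      omega
    have hcard : m ≤ M := by
      have := Finset.card_le_card hsub
      simp [h] at this; omega
    have herase : (S.erase M).card = m := by
      simp [Finset.card_erase_of_mem hMem, h]
    have := ih herase
    have hsum : ∑ i ∈ S, i = M + ∑ i ∈ S.erase M, i := by
      rw [← Finset.add_sum_erase _ _ hMem]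
    have hTm : Tm (m + 1) = Tm m + m := by
      simp [Tm, Finset.sum_range_succ]
    omega

lemma X_pow_Tm_mul_Cpoly (m n : ℕ) : X ^ Tm m * Cpoly m n = Gt m (m + n) := by
  rw [Cpoly, Gt, Finset.mul_sum]
  refine Finset.sum_congr rfl fun S hS => ?_
  rw [Finset.mem_powersetCard] at hS
  have := Tm_le_sum hS.2
  rw [← pow_add]
  congr 1
  omega

lemma qnum_add (m n : ℕ) : qnum (m + n) = qnum n + X ^ n * qnum m := by
  rw [show m + n = n + m from by omega, qnum, qnum, qnum, Finset.mul_sum,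
    Finset.sum_range_add]
  congr 1
  refine Finset.sum_congr rfl fun i _ => ?_
  rw [← pow_add]

lemma Gt_succ (m N : ℕ) :
    Gt (m + 1) (N + 1) = Gt (m + 1) N + X ^ N * Gt m N := by
  rw [Gt, Gt, Gt]
  rw [Finset.range_add_one, Finset.powersetCard_succ_insert (by simp)]
  rw [Finset.sum_union]
  · congr 1
    rw [Finset.sum_image, Finset.mul_sum]
    · refine Finset.sum_congr rfl fun S hS => ?_
      rw [Finset.mem_powersetCard] at hS
      have hN : N ∉ S := fun h => by simpa using hS.1 h
      rw [Finset.sum_insert hN, ← pow_add]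
    · intro S hS T hT hST
      rw [Finset.mem_coe, Finset.mem_powersetCard] at hS hT
      have hNS : N ∉ S := fun h => by simpa using hS.1 h
      have hNT : N ∉ T := fun h => by simpa using hT.1 h
      have := congrArg (Finset.erase · N) hST
      simpa [Finset.erase_insert, hNS, hNT] using this
  · rw [Finset.disjoint_right]
    intro S hS hS'
    rw [Finset.mem_image] at hS
    rw [Finset.mem_powersetCard] at hS'
    obtain ⟨T, hT, rfl⟩ := hS
    have : N ∈ (range N) := hS'.1 (Finset.mem_insert_self N T)
    simp at this

lemma qfact_succ (N : ℕ) : qfact (N + 1) = qfact N * qnum (N + 1) := by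
  rw [qfact, qfact, Finset.prod_range_succ]

lemma Gt_mul_qfact : ∀ N m n, m + n = N →
    Gt m N * (qfact m * qfact n) = X ^ Tm m * qfact N := by
  intro N
  induction N with
  | zero =>
    intro m n h
    obtain ⟨rfl, rfl⟩ : m = 0 ∧ n = 0 := by omega
    simp [Gt, Tm, qfact]
  | succ N ih =>
    intro m n h
    rcases Nat.eq_zero_or_pos m with rfl | hm
    · -- m = 0
      have : Gt 0 (N+1) = 1 := by
        simp [Gt, Finset.powersetCard_zero]
      rw [this]
      simp_all [Tm, qfact]
    rcases Nat.eq_zero_or_pos n with rfl | hn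
    · -- n = 0 : Gt m m = X ^ Tm m
      have hmN : m = N + 1 := by omega
      subst hmN
      have : Gt (N+1) (N+1) = X ^ Tm (N+1) := by
        have hps : (range (N+1)).powersetCard (N+1) = {range (N+1)} := by
          simpa using Finset.powersetCard_self (range (N+1))
        rw [Gt, hps]
        simp [Tm]
      rw [this]
      simp [qfact]
    -- m, n ≥ 1
    obtain ⟨m', rfl⟩ : ∃ m', m = m' + 1 := ⟨m - 1, by omega⟩
    obtain ⟨n', rfl⟩ : ∃ n', n = n' + 1 := ⟨n - 1, by omega⟩
    have hN : m' + 1 + n' = N := by omega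
    have hN' : m' + (n' + 1) = N := by omega
    have e1 := ih (m' + 1) n' hN
    have e2 := ih m' (n' + 1) hN'
    rw [Gt_succ]
    have hq : qnum (N + 1) = qnum (n' + 1) + X ^ (n' + 1) * qnum (m' + 1) := by
      have : N + 1 = (m' + 1) + (n' + 1) := by omega
      rw [this, qnum_add]
    have hTm : Tm (m' + 1) = Tm m' + m' := by simp [Tm, Finset.sum_range_succ]
    rw [qfact_succ N, hq]
    have hf1 : qfact (n' + 1) = qfact n' * qnum (n' + 1) := qfact_succ n'
    have hf2 : qfact (m' + 1) = qfact m' * qnum (m' + 1) := qfact_succ m'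
    calc (Gt (m' + 1) N + X ^ N * Gt m' N) * (qfact (m' + 1) * qfact (n' + 1))
        = (Gt (m' + 1) N * (qfact (m' + 1) * qfact n')) * qnum (n' + 1)
          + X ^ N * (Gt m' N * (qfact m' * qfact (n' + 1))) * qnum (m' + 1) := by
          rw [hf1, hf2]; ring
      _ = (X ^ Tm (m' + 1) * qfact N) * qnum (n' + 1)
          + X ^ N * (X ^ Tm m' * qfact N) * qnum (m' + 1) := by rw [e1, e2]
      _ = X ^ Tm (m' + 1) * (qfact N * (qnum (n' + 1) + X ^ (n' + 1) * qnum (m' + 1))) := by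
          rw [hTm]
          have hp : (X : Polynomial ℤ) ^ N * X ^ Tm m' = X ^ (Tm m' + m') * X ^ (n' + 1) := by
            rw [← pow_add, ← pow_add]; congr 1; omega
          linear_combination (qfact N * qnum (m' + 1)) * hp

lemma Cpoly_mul_qfact (m n : ℕ) :
    Cpoly m n * (qfact m * qfact n) = qfact (m + n) := by
  have h := Gt_mul_qfact (m + n) m n rfl
  rw [← X_pow_Tm_mul_Cpoly] at h
  have hX : (X : Polynomial ℤ) ^ Tm m ≠ 0 := pow_ne_zero _ X_ne_zero
  apply mul_left_cancel₀ hX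
  rw [← h]; ring



def lev (m N s : ℕ) : Finset (Finset ℕ) :=
  ((range N).powersetCard m).filter (fun S => ∑ i ∈ S, i = s)

lemma coeff_Cpoly (m n k : ℕ) :
    (Cpoly m n).coeff k = ((lev m (m + n) (k + Tm m)).card : ℤ) := by
  rw [Cpoly, finset_sum_coeff]
  simp only [coeff_X_pow]
  rw [Finset.sum_boole]
  rw [lev]
  congr 2
  apply Finset.filter_congr
  intro S hS
  rw [Finset.mem_powersetCard] at hS
  have := Tm_le_sum hS.2
  constructor <;> intro h <;> simp_all <;> omega

lemma two_Tm (m : ℕ) : 2 * Tm m = m * (m - 1) := by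
  rw [Tm, ← Finset.sum_range_id_mul_two m]; ring

lemma sum_upper : ∀ (m N : ℕ) (S : Finset ℕ), S ⊆ range N → S.card = m →
    ∑ i ∈ S, i ≤ m * (N - m) + Tm m := by
  intro m
  induction m with
  | zero =>
    intro N S _ h
    rw [Finset.card_eq_zero] at h
    simp [h, Tm]
  | succ m ih =>
    intro N S hsub h
    have hne : S.Nonempty := by rw [← Finset.card_pos, h]; omega
    set M := S.max' hne with hM
    have hMem : M ∈ S := S.max'_mem hne
    have hMN : M < N := by have := hsub hMem; simpa using this
    have herase : (S.erase M).card = m := by simp [Finset.card_erase_of_mem hMem, h]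
    have heraseSub : S.erase M ⊆ range M := by
      intro x hx
      have hxS := Finset.mem_of_mem_erase hx
      have hxne := Finset.ne_of_mem_erase hx
      have := S.le_max' x hxS
      simp only [mem_range]; omega
    have hmM : m ≤ M := by
      have := Finset.card_le_card heraseSub
      simp [herase] at this; omega
    have hih := ih M (S.erase M) heraseSub herase
    have hsum : ∑ i ∈ S, i = M + ∑ i ∈ S.erase M, i := by
      rw [← Finset.add_sum_erase _ _ hMem]
    have hTm : Tm (m + 1) = Tm m + m := by simp [Tm, Finset.sum_range_succ]
    have hmul : m * (M - m) ≤ m * (N - 1 - m) := Nat.mul_le_mul_left m (by omega)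
    have hexp : (m + 1) * (N - (m + 1)) = m * (N - 1 - m) + (N - 1 - m) := by
      have : N - (m + 1) = N - 1 - m := by omega
      rw [this]; ring
    omega

lemma lev_top : ∀ (m N : ℕ), m ≤ N → ∀ S ∈ lev m N (m * (N - m) + Tm m),
    S = (range m).image (fun i => (N - m) + i) := by
  intro m
  induction m with
  | zero =>
    intro N _ S hS
    simp only [lev, Finset.mem_filter, Finset.mem_powersetCard] at hS
    rw [Finset.card_eq_zero] at hS
    simp [hS.1.2]
  | succ m ih =>
    intro N hmN S hS
    simp only [lev, Finset.mem_filter, Finset.mem_powersetCard] at hS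
    obtain ⟨⟨hsub, hcard⟩, hsum⟩ := hS
    have hne : S.Nonempty := by rw [← Finset.card_pos, hcard]; omega
    set M := S.max' hne with hM
    have hMem : M ∈ S := S.max'_mem hne
    have hMN : M < N := by have := hsub hMem; simpa using this
    have herase : (S.erase M).card = m := by simp [Finset.card_erase_of_mem hMem, hcard]
    have heraseSub : S.erase M ⊆ range M := by
      intro x hx
      have hxS := Finset.mem_of_mem_erase hx
      have hxne := Finset.ne_of_mem_erase hx
      have := S.le_max' x hxS
      simp only [mem_range]; omega
    have hmM : m ≤ M := by
      have := Finset.card_le_card heraseSub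
      simp [herase] at this; omega
    have hsumsplit : ∑ i ∈ S, i = M + ∑ i ∈ S.erase M, i := by
      rw [← Finset.add_sum_erase _ _ hMem]
    have hTm : Tm (m + 1) = Tm m + m := by simp [Tm, Finset.sum_range_succ]
    -- M must be N - 1
    have hMtop : M = N - 1 := by
      by_contra hne'
      have hM2 : M ≤ N - 2 := by omega
      have hub := sum_upper m M (S.erase M) heraseSub herase
      have hmul : m * (M - m) ≤ m * (N - 2 - m) := Nat.mul_le_mul_left m (by omega)
      have hexp : (m + 1) * (N - (m + 1)) = m * (N - 2 - m) + (N - 2 - m) + m + 1 := by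
        have h2 : m + 2 ≤ N := by omega
        have : N - (m + 1) = (N - 2 - m) + 1 := by omega
        rw [this]; ring
      omega
    -- erase is in lev m (N-1)
    have herasesum : ∑ i ∈ S.erase M, i = m * (N - 1 - m) + Tm m := by
      have hexp : (m + 1) * (N - (m + 1)) = m * (N - 1 - m) + (N - 1 - m) := by
        have : N - (m + 1) = N - 1 - m := by omega
        rw [this]; ring
      omega
    have heraseSub' : S.erase M ⊆ range (N - 1) := by
      rw [← hMtop]; exact heraseSub
    have hih := ih (N - 1) (by omega) (S.erase M) (by
      simp only [lev, Finset.mem_filter, Finset.mem_powersetCard]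
      exact ⟨⟨heraseSub', herase⟩, by rw [herasesum]⟩)
    have hSi : S = insert M (S.erase M) := (Finset.insert_erase hMem).symm
    rw [hSi, hih, Finset.range_add_one, Finset.image_insert]
    have h1 : N - 1 - m = N - (m + 1) := by omega
    have h2 : N - (m + 1) + m = N - 1 := by omega
    rw [hMtop, h1, h2]

lemma lev_top_card (m n : ℕ) : (lev m (m + n) (m * n + Tm m)).card = 1 := by
  have htop : (range m).image (fun i => n + i) ∈ lev m (m + n) (m * n + Tm m) := by
    simp only [lev, Finset.mem_filter, Finset.mem_powersetCard]
    refine ⟨⟨?_, ?_⟩, ?_⟩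
    · intro x hx
      simp only [Finset.mem_image, Finset.mem_range] at hx
      obtain ⟨i, hi, rfl⟩ := hx
      simp only [mem_range]; omega
    · rw [Finset.card_image_of_injective _ (fun a b => by omega), Finset.card_range]
    · rw [Finset.sum_image (fun a _ b _ => by omega)]
      rw [Finset.sum_add_distrib, Finset.sum_const, Finset.card_range, Tm]
      ring_nf
  rw [Finset.card_eq_one]
  refine ⟨(range m).image (fun i => n + i), ?_⟩
  apply Finset.eq_singleton_iff_unique_mem.mpr
  refine ⟨htop, fun S hS => ?_⟩
  have h1 : m * ((m + n) - m) = m * n := by congr 1; omega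
  have := lev_top m (m + n) (by omega) S (by rwa [h1])
  rw [this]
  simp only [show m + n - m = n from by omega]

lemma lev_empty_of_big (m n s : ℕ) (hs : m * n + Tm m < s) : lev m (m + n) s = ∅ := by
  rw [Finset.eq_empty_iff_forall_notMem]
  intro S hS
  simp only [lev, Finset.mem_filter, Finset.mem_powersetCard] at hS
  have := sum_upper m (m + n) S hS.1.1 hS.1.2
  have h1 : m * ((m + n) - m) = m * n := by congr 1; omega
  omega

lemma natDegree_Cpoly (m n : ℕ) : (Cpoly m n).natDegree = m * n := by
  apply le_antisymm
  · rw [Polynomial.natDegree_le_iff_coeff_eq_zero]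
    intro k hk
    rw [coeff_Cpoly, lev_empty_of_big m n _ (by omega)]
    simp
  · apply Polynomial.le_natDegree_of_ne_zero
    rw [coeff_Cpoly, lev_top_card]
    simp

lemma lev_symm_card (m n k : ℕ) (hk : k ≤ m * n) :
    (lev m (m + n) (k + Tm m)).card = (lev m (m + n) (m * n - k + Tm m)).card := by
  have h2Tm := two_Tm m
  set N := m + n with hN
  have key : ∀ s t : ℕ, s + t = m * n + 2 * Tm m →
      ∀ S ∈ lev m N s, (S.image (fun x => N - 1 - x)) ∈ lev m N t := by
    intro s t hst S hS
    simp only [lev, Finset.mem_filter, Finset.mem_powersetCard] at hS ⊢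
    obtain ⟨⟨hsub, hcard⟩, hsum⟩ := hS
    have hxlt : ∀ x ∈ S, x < N := fun x hx => by simpa using hsub hx
    have hinj : ∀ x ∈ S, ∀ y ∈ S, N - 1 - x = N - 1 - y → x = y := by
      intro x hx y hy hxy
      have := hxlt x hx; have := hxlt y hy; omega
    refine ⟨⟨?_, ?_⟩, ?_⟩
    · intro y hy
      simp only [Finset.mem_image] at hy
      obtain ⟨x, hx, rfl⟩ := hy
      have := hxlt x hx
      simp only [mem_range]; omega
    · rw [Finset.card_image_of_injOn hinj, hcard]
    · rw [Finset.sum_image hinj]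
      have hterm : ∀ x ∈ S, N - 1 - x = (N - 1) - x := fun _ _ => rfl
      have hle : ∀ x ∈ S, x ≤ N - 1 := fun x hx => by have := hxlt x hx; omega
      have hsle : s ≤ m * (N - 1) := by
        rw [← hsum]
        have := Finset.sum_le_sum hle
        simpa [hcard, Finset.sum_const, smul_eq_mul] using this
      have hsum2 : ∑ x ∈ S, (N - 1 - x) = m * (N - 1) - s := by
        have : ∑ x ∈ S, (N - 1 - x) + ∑ x ∈ S, x = ∑ x ∈ S, (N - 1) := by
          rw [← Finset.sum_add_distrib]
          exact Finset.sum_congr rfl fun x hx => by have := hle x hx; omega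
        rw [Finset.sum_const, hcard, smul_eq_mul, hsum] at this
        omega
      rw [hsum2]
      have hmN : m * (N - 1) = m * n + 2 * Tm m := by
        rcases Nat.eq_zero_or_pos m with rfl | hm
        · simp [Tm]
        · have : N - 1 = n + (m - 1) := by omega
          rw [this, Nat.mul_add, h2Tm]
      omega
  have hrev : ∀ (T : Finset ℕ), T ⊆ range N → (T.image (fun x => N - 1 - x)).image (fun x => N - 1 - x) = T := by
    intro T hsub
    rw [Finset.image_image]
    rw [show ((fun x => N - 1 - x) ∘ fun x => N - 1 - x) = fun x => N - 1 - (N - 1 - x) from rfl]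
    apply Finset.image_congr (g := id) ?_ |>.trans (Finset.image_id)
    intro x hx
    have : x < N := by simpa using hsub hx
    simp; omega
  apply Finset.card_bij (fun S _ => S.image (fun x => N - 1 - x))
  · intro S hS
    exact key _ _ (by omega) S hS
  · intro S hS S' hS' heq
    simp only [lev, Finset.mem_filter, Finset.mem_powersetCard] at hS hS'
    calc S = (S.image (fun x => N - 1 - x)).image (fun x => N - 1 - x) := (hrev S hS.1.1).symm
    _ = (S'.image (fun x => N - 1 - x)).image (fun x => N - 1 - x) := by rw [heq]
    _ = S' := hrev S' hS'.1.1
  · intro T hT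
    refine ⟨T.image (fun x => N - 1 - x), key _ _ (by omega) T hT, ?_⟩
    simp only [lev, Finset.mem_filter, Finset.mem_powersetCard] at hT
    exact hrev T hT.1.1

lemma coeff_symm (m n k : ℕ) (hk : k ≤ m * n) :
    (Cpoly m n).coeff k = (Cpoly m n).coeff (m * n - k) := by
  rw [coeff_Cpoly, coeff_Cpoly, lev_symm_card m n k hk]



def aQ (N i : ℕ) : ℚ := (i : ℚ) * ((N : ℚ) - i)
def upS (T : Finset ℕ) (k : ℕ) : Finset ℕ := insert (k + 1) (T.erase k)
def dnS (T : Finset ℕ) (k : ℕ) : Finset ℕ := insert (k - 1) (T.erase k)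

noncomputable def Eop (N : ℕ) (v : Finset ℕ → ℚ) : Finset ℕ → ℚ :=
  fun T => ∑ k ∈ T.filter (fun k => k + 1 ∉ T), aQ N (k + 1) * v (upS T k)

noncomputable def Fop (N : ℕ) (v : Finset ℕ → ℚ) : Finset ℕ → ℚ :=
  fun T => ∑ k ∈ T.filter (fun k => k - 1 ∉ T ∧ k < N), v (dnS T k)

def wtc (N : ℕ) (T : Finset ℕ) : ℚ := ∑ i ∈ T, ((N : ℚ) - 1 - 2 * i)

lemma aQ_succ_sub (N i : ℕ) : aQ N (i + 1) - aQ N i = (N : ℚ) - 1 - 2 * i := by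
  simp only [aQ]; push_cast; ring

lemma aQ_N (N : ℕ) : aQ N N = 0 := by simp [aQ]
lemma aQ_zero (N : ℕ) : aQ N 0 = 0 := by simp [aQ]

lemma mem_upS {T : Finset ℕ} {k x : ℕ} : x ∈ upS T k ↔ x = k + 1 ∨ (x ≠ k ∧ x ∈ T) := by
  simp [upS, Finset.mem_insert, Finset.mem_erase]

lemma mem_dnS {T : Finset ℕ} {k x : ℕ} : x ∈ dnS T k ↔ x = k - 1 ∨ (x ≠ k ∧ x ∈ T) := by
  simp [dnS, Finset.mem_insert, Finset.mem_erase]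

lemma dn_up (T : Finset ℕ) (k : ℕ) (hk : k ∈ T) (hk1 : k + 1 ∉ T) :
    dnS (upS T k) (k + 1) = T := by
  rw [dnS, upS, Finset.erase_insert (by simp [hk1]), Nat.add_sub_cancel,
    Finset.insert_erase hk]

lemma up_dn (T : Finset ℕ) (l : ℕ) (hl : l ∈ T) (hl1 : l - 1 ∉ T) :
    upS (dnS T l) (l - 1) = T := by
  have hl0 : l ≠ 0 := by rintro rfl; simp_all
  rw [upS, dnS, Finset.erase_insert (by simp [hl1]), Nat.sub_add_cancel (by omega),
    Finset.insert_erase hl]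

/-- Packaged off-diagonal condition. -/
def OffT (N : ℕ) (T : Finset ℕ) (k l : ℕ) : Prop :=
  k ∈ T ∧ l ∈ T ∧ k + 1 ∉ T ∧ l - 1 ∉ T ∧ l < N ∧ l ≠ k + 1 ∧ l ≠ k + 2 ∧ k ≠ l ∧ l ≠ 0

lemma offT_iff_1 (N : ℕ) (T : Finset ℕ) (k l : ℕ) :
    ((k ∈ T ∧ k + 1 ∉ T) ∧ (l ∈ upS T k ∧ l - 1 ∉ upS T k ∧ l < N) ∧ l ≠ k + 1) ↔
      OffT N T k l := by
  rw [OffT]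
  constructor
  · rintro ⟨⟨hkT, hk1T⟩, ⟨hlu, hl1u, hlN⟩, hne⟩
    rw [mem_upS] at hlu hl1u
    have hl0 : l ≠ 0 := by
      rintro rfl
      exact hl1u hlu
    push_neg at hl1u
    have hlT : l ∈ T := by
      rcases hlu with h | h
      · omega
      · exact h.2
    have hlk : l ≠ k := by
      rcases hlu with h | h
      · omega
      · exact h.1
    have hl1T : l - 1 ∉ T := fun h => by
      have h2 := hl1u.2
      have : l - 1 = k := by tauto
      omega
    exact ⟨hkT, hlT, hk1T, hl1T, hlN, hne, by omega, fun h => hlk h.symm, hl0⟩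
  · rintro ⟨hkT, hlT, hk1T, hl1T, hlN, h1, h2, h3, h4⟩
    refine ⟨⟨hkT, hk1T⟩, ⟨?_, ?_, hlN⟩, h1⟩
    · rw [mem_upS]; exact Or.inr ⟨fun h => h3 h.symm, hlT⟩
    · rw [mem_upS]; push_neg
      exact ⟨by omega, fun _ => hl1T⟩

lemma offT_iff_2 (N : ℕ) (T : Finset ℕ) (k l : ℕ) :
    ((l ∈ T ∧ l - 1 ∉ T ∧ l < N) ∧ (k ∈ dnS T l ∧ k + 1 ∉ dnS T l) ∧ k + 1 ≠ l) ↔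
      OffT N T k l := by
  rw [OffT]
  constructor
  · rintro ⟨⟨hlT, hl1T, hlN⟩, ⟨hkd, hk1d⟩, hne⟩
    rw [mem_dnS] at hkd hk1d
    have hl0 : l ≠ 0 := by rintro rfl; simp_all
    push_neg at hk1d
    have hkT : k ∈ T := by
      rcases hkd with h | h
      · omega
      · exact h.2
    have hkl : k ≠ l := by
      rcases hkd with h | h
      · omega
      · exact h.1
    have hk1T : k + 1 ∉ T := fun h => by
      have h2 := hk1d.2
      have : k + 1 = l := by tauto
      omega
    exact ⟨hkT, hlT, hk1T, hl1T, hlN, fun h => hne h.symm,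
      by have := hk1d.1; omega, hkl, hl0⟩
  · rintro ⟨hkT, hlT, hk1T, hl1T, hlN, h1, h2, h3, h4⟩
    refine ⟨⟨hlT, hl1T, hlN⟩, ⟨?_, ?_⟩, fun h => h1 h.symm⟩
    · rw [mem_dnS]; exact Or.inr ⟨by omega, hkT⟩
    · rw [mem_dnS]; push_neg
      exact ⟨by omega, fun _ => hk1T⟩

lemma offT_comm {N : ℕ} {T : Finset ℕ} {k l : ℕ} (h : OffT N T k l) :
    dnS (upS T k) l = upS (dnS T l) k := by
  obtain ⟨hkT, hlT, hk1T, hl1T, hlN, h1, h2, h3, h4⟩ := h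
  rw [dnS, upS, Finset.erase_insert_of_ne (by omega : k + 1 ≠ l)]
  rw [upS, dnS, Finset.erase_insert_of_ne (by omega : l - 1 ≠ k)]
  rw [Finset.erase_right_comm]
  rw [Finset.insert_comm]

/-- The key combinatorial commutator identity `[E,F] = H` on good sets. -/
lemma commutator (N : ℕ) (v : Finset ℕ → ℚ) (T : Finset ℕ) (hT : T ⊆ range N) :
    Eop N (Fop N v) T - Fop N (Eop N v) T = wtc N T * v T := by
  classical
  have hTlt : ∀ x ∈ T, x < N := fun x hx => by simpa using hT hx
  have e1 : Eop N (Fop N v) T =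
      ∑ x ∈ (T.filter (fun k => k + 1 ∉ T)).sigma
          (fun k => (upS T k).filter (fun l => l - 1 ∉ upS T k ∧ l < N)),
        aQ N (x.1 + 1) * v (dnS (upS T x.1) x.2) := by
    rw [Eop, Finset.sum_sigma]
    refine Finset.sum_congr rfl fun k _ => ?_
    rw [Fop, Finset.mul_sum]
  have e2 : Fop N (Eop N v) T =
      ∑ y ∈ (T.filter (fun l => l - 1 ∉ T ∧ l < N)).sigma
          (fun l => (dnS T l).filter (fun k => k + 1 ∉ dnS T l)),
        aQ N (y.2 + 1) * v (upS (dnS T y.1) y.2) := by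
    rw [Fop, Finset.sum_sigma]
    refine Finset.sum_congr rfl fun l _ => ?_
    rw [Eop]
  rw [e1, e2]
  rw [← Finset.sum_filter_add_sum_filter_not
      ((T.filter (fun k => k + 1 ∉ T)).sigma
        (fun k => (upS T k).filter (fun l => l - 1 ∉ upS T k ∧ l < N)))
      (fun x => x.2 = x.1 + 1),
    ← Finset.sum_filter_add_sum_filter_not
      ((T.filter (fun l => l - 1 ∉ T ∧ l < N)).sigma
        (fun l => (dnS T l).filter (fun k => k + 1 ∉ dnS T l)))
      (fun y => y.2 + 1 = y.1)]
  have hoff :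
      ∑ x ∈ ((T.filter (fun k => k + 1 ∉ T)).sigma
          (fun k => (upS T k).filter (fun l => l - 1 ∉ upS T k ∧ l < N))).filter
          (fun x => ¬ x.2 = x.1 + 1),
        aQ N (x.1 + 1) * v (dnS (upS T x.1) x.2) =
      ∑ y ∈ ((T.filter (fun l => l - 1 ∉ T ∧ l < N)).sigma
          (fun l => (dnS T l).filter (fun k => k + 1 ∉ dnS T l))).filter
          (fun y => ¬ y.2 + 1 = y.1),
        aQ N (y.2 + 1) * v (upS (dnS T y.1) y.2) := by
    refine Finset.sum_nbij' (fun x => ⟨x.2, x.1⟩) (fun y => ⟨y.2, y.1⟩) ?_ ?_ ?_ ?_ ?_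
    · rintro ⟨k, l⟩ hx
      simp only [Finset.mem_filter, Finset.mem_sigma] at hx ⊢
      have hOff : OffT N T k l := by
        apply (offT_iff_1 N T k l).mp
        obtain ⟨⟨hk, hl⟩, hne⟩ := hx
        exact ⟨hk, ⟨hl.1, hl.2.1, hl.2.2⟩, hne⟩
      obtain h2 := (offT_iff_2 N T k l).mpr hOff
      exact ⟨⟨⟨h2.1.1, h2.1.2.1, h2.1.2.2⟩, h2.2.1⟩, h2.2.2⟩
    · rintro ⟨l, k⟩ hy
      simp only [Finset.mem_filter, Finset.mem_sigma] at hy ⊢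
      have hOff : OffT N T k l := by
        apply (offT_iff_2 N T k l).mp
        obtain ⟨⟨hl, hk⟩, hne⟩ := hy
        exact ⟨⟨hl.1, hl.2.1, hl.2.2⟩, hk, hne⟩
      obtain h1 := (offT_iff_1 N T k l).mpr hOff
      exact ⟨⟨h1.1, ⟨h1.2.1.1, h1.2.1.2.1, h1.2.1.2.2⟩⟩, h1.2.2⟩
    · rintro ⟨k, l⟩ _; rfl
    · rintro ⟨l, k⟩ _; rfl
    · rintro ⟨k, l⟩ hx
      simp only
      have hOff : OffT N T k l := by
        apply (offT_iff_1 N T k l).mp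
        simp only [Finset.mem_filter, Finset.mem_sigma] at hx
        obtain ⟨⟨hk, hl⟩, hne⟩ := hx
        exact ⟨hk, ⟨hl.1, hl.2.1, hl.2.2⟩, hne⟩
      rw [offT_comm hOff]
  have hdiag1 :
      ∑ x ∈ ((T.filter (fun k => k + 1 ∉ T)).sigma
          (fun k => (upS T k).filter (fun l => l - 1 ∉ upS T k ∧ l < N))).filter
          (fun x => x.2 = x.1 + 1),
        aQ N (x.1 + 1) * v (dnS (upS T x.1) x.2) =
      ∑ k ∈ T.filter (fun k => k + 1 ∉ T ∧ k + 1 < N), aQ N (k + 1) * v T := by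
    refine Finset.sum_nbij' (fun x => x.1) (fun k => ⟨k, k + 1⟩) ?_ ?_ ?_ ?_ ?_
    · rintro ⟨k, l⟩ hx
      simp only [Finset.mem_filter, Finset.mem_sigma] at hx ⊢
      obtain ⟨⟨hk, hl⟩, hd⟩ := hx
      exact ⟨hk.1, hk.2, by omega⟩
    · rintro k hk
      simp only [Finset.mem_filter, Finset.mem_sigma] at hk ⊢
      obtain ⟨hkT, hk1T, hkN⟩ := hk
      refine ⟨⟨⟨hkT, hk1T⟩, ?_, ?_, hkN⟩, trivial⟩
      · rw [mem_upS]; exact Or.inl rfl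
      · rw [Nat.add_sub_cancel, mem_upS]; push_neg
        exact ⟨by omega, fun h => absurd rfl h⟩
    · rintro ⟨k, l⟩ hx
      simp only [Finset.mem_filter] at hx
      simp only at hx ⊢
      rw [hx.2]
    · rintro k _; rfl
    · rintro ⟨k, l⟩ hx
      simp only [Finset.mem_filter, Finset.mem_sigma] at hx
      obtain ⟨⟨hk, hl⟩, hd⟩ := hx
      simp only at hd ⊢
      rw [hd, dn_up T k hk.1 hk.2]
  have hdiag2 :
      ∑ y ∈ ((T.filter (fun l => l - 1 ∉ T ∧ l < N)).sigma
          (fun l => (dnS T l).filter (fun k => k + 1 ∉ dnS T l))).filter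
          (fun y => y.2 + 1 = y.1),
        aQ N (y.2 + 1) * v (upS (dnS T y.1) y.2) =
      ∑ l ∈ T.filter (fun l => l - 1 ∉ T ∧ l < N), aQ N l * v T := by
    refine Finset.sum_nbij' (fun y => y.1) (fun l => ⟨l, l - 1⟩) ?_ ?_ ?_ ?_ ?_
    · rintro ⟨l, k⟩ hy
      simp only [Finset.mem_filter, Finset.mem_sigma] at hy ⊢
      exact hy.1.1
    · rintro l hl
      simp only [Finset.mem_filter, Finset.mem_sigma] at hl ⊢
      obtain ⟨hlT, hl1T, hlN⟩ := hl
      have hl0 : l ≠ 0 := by rintro rfl; simp_all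
      refine ⟨⟨⟨hlT, hl1T, hlN⟩, ?_, ?_⟩, by omega⟩

      · rw [mem_dnS]; exact Or.inl rfl
      · rw [show l - 1 + 1 = l from by omega, mem_dnS]; push_neg
        exact ⟨by omega, fun h => absurd rfl h⟩
    · rintro ⟨l, k⟩ hy
      simp only [Finset.mem_filter] at hy
      simp only at hy ⊢
      have : l - 1 = k := by omega
      rw [this]
    · rintro l _; rfl
    · rintro ⟨l, k⟩ hy
      simp only [Finset.mem_filter, Finset.mem_sigma] at hy
      obtain ⟨⟨hl, hk⟩, hd⟩ := hy
      simp only at hd ⊢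
      have hl0 : l ≠ 0 := by
        rintro rfl
        simp_all
      have hk' : k = l - 1 := by omega
      subst hk'
      rw [show l - 1 + 1 = l from by omega, up_dn T l hl.1 hl.2.1]
  rw [hoff, hdiag1, hdiag2]
  have hext : ∑ k ∈ T.filter (fun k => k + 1 ∉ T ∧ k + 1 < N), aQ N (k + 1) * v T =
      ∑ k ∈ T.filter (fun k => k + 1 ∉ T), aQ N (k + 1) * v T := by
    apply Finset.sum_subset
    · intro x hx
      simp only [Finset.mem_filter] at hx ⊢
      exact ⟨hx.1, hx.2.1⟩
    · intro k hk hnk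
      simp only [Finset.mem_filter] at hk hnk
      have h1 : k + 1 = N := by
        have h2 := hTlt k hk.1
        by_contra h
        exact hnk ⟨hk.1, hk.2, by omega⟩
      rw [h1, aQ_N]
      ring
  rw [hext]
  have hfix : T.filter (fun l => l - 1 ∉ T ∧ l < N) = T.filter (fun l => l - 1 ∉ T) := by
    apply Finset.filter_congr
    intro l hl
    have := hTlt l hl
    constructor
    · rintro ⟨h, _⟩; exact h
    · intro h; exact ⟨h, this⟩
  rw [hfix]
  -- coefficient identity
  have hmatch : ∑ k ∈ T.filter (fun k => ¬ (k + 1 ∉ T)), aQ N (k + 1) =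
      ∑ l ∈ T.filter (fun l => ¬ (l - 1 ∉ T)), aQ N l := by
    have hres : ∑ l ∈ T.filter (fun l => ¬ (l - 1 ∉ T)), aQ N l =
        ∑ l ∈ T.filter (fun l => ¬ (l - 1 ∉ T) ∧ l ≠ 0), aQ N l := by
      refine (Finset.sum_subset ?_ ?_).symm
      · intro x hx
        simp only [Finset.mem_filter] at hx ⊢
        exact ⟨hx.1, hx.2.1⟩
      · intro l hl hnl
        simp only [Finset.mem_filter] at hl hnl
        have : l = 0 := by
          by_contra h
          exact hnl ⟨hl.1, hl.2, h⟩
        rw [this, aQ_zero]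
    rw [hres]
    refine Finset.sum_nbij' (fun k => k + 1) (fun l => l - 1) ?_ ?_ ?_ ?_ ?_
    · intro k hk
      simp only [Finset.mem_filter, not_not] at hk ⊢
      exact ⟨hk.2, by rw [Nat.add_sub_cancel]; exact hk.1, by omega⟩
    · intro l hl
      simp only [Finset.mem_filter, not_not] at hl ⊢
      obtain ⟨hlT, hl1T, hl0⟩ := hl
      exact ⟨hl1T, by rw [show l - 1 + 1 = l from by omega]; exact hlT⟩
    · intro k _; rfl
    · intro l hl
      simp only [Finset.mem_filter, not_not] at hl
      obtain ⟨-, -, hl0⟩ := hl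
      show l - 1 + 1 = l
      omega
    · intro k _; rfl
  have hs1 := Finset.sum_filter_add_sum_filter_not T (fun k => k + 1 ∉ T)
    (fun k => aQ N (k + 1))
  have hs2 := Finset.sum_filter_add_sum_filter_not T (fun l => l - 1 ∉ T)
    (fun l => aQ N l)
  have hwt : wtc N T = (∑ k ∈ T, aQ N (k + 1)) - ∑ l ∈ T, aQ N l := by
    rw [wtc, ← Finset.sum_sub_distrib]
    exact Finset.sum_congr rfl fun i _ => (aQ_succ_sub N i).symm
  rw [← Finset.sum_mul, ← Finset.sum_mul]
  have hkey : (∑ k ∈ T.filter (fun k => k + 1 ∉ T), aQ N (k + 1)) -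
      (∑ l ∈ T.filter (fun l => l - 1 ∉ T), aQ N l) = wtc N T := by
    rw [hwt]
    linarith [hmatch, hs1, hs2]
  linear_combination (v T) * hkey

lemma Eop_add (N : ℕ) (u w : Finset ℕ → ℚ) (T : Finset ℕ) :
    Eop N (fun S => u S + w S) T = Eop N u T + Eop N w T := by
  rw [Eop, Eop, Eop, ← Finset.sum_add_distrib]
  exact Finset.sum_congr rfl fun k _ => by ring

lemma Eop_smul (N : ℕ) (c : ℚ) (u : Finset ℕ → ℚ) (T : Finset ℕ) :
    Eop N (fun S => c * u S) T = c * Eop N u T := by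
  rw [Eop, Eop, Finset.mul_sum]
  exact Finset.sum_congr rfl fun k _ => by ring

lemma Fop_smul (N : ℕ) (c : ℚ) (u : Finset ℕ → ℚ) (T : Finset ℕ) :
    Fop N (fun S => c * u S) T = c * Fop N u T := by
  rw [Fop, Fop, Finset.mul_sum]

lemma Eop_zero (N : ℕ) : Eop N (fun _ => 0) = fun _ => 0 := by
  funext T; rw [Eop]; simp

lemma Fop_zero (N : ℕ) : Fop N (fun _ => 0) = fun _ => 0 := by
  funext T; rw [Fop]; simp

def SuppIn (A : Finset ℕ → Prop) (v : Finset ℕ → ℚ) : Prop := ∀ S, v S ≠ 0 → A S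

def Amn (N m s : ℕ) (S : Finset ℕ) : Prop :=
  S ⊆ range N ∧ S.card = m ∧ ∑ i ∈ S, i = s

lemma suppIn_Fop {N m s : ℕ} {v : Finset ℕ → ℚ} (h : SuppIn (Amn N m s) v) :
    SuppIn (Amn N m (s + 1)) (Fop N v) := by
  intro T hT
  rw [Fop] at hT
  obtain ⟨k, hk, hne⟩ := Finset.exists_ne_zero_of_sum_ne_zero hT
  simp only [Finset.mem_filter] at hk
  obtain ⟨hkT, hk1T, hkN⟩ := hk
  have hk0 : k ≠ 0 := by rintro rfl; simp_all
  obtain ⟨hsub, hcard, hsum⟩ := h _ hne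
  have hne1 : k - 1 ∉ T.erase k := fun h => hk1T (Finset.mem_of_mem_erase h)
  have hcard' : (dnS T k).card = T.card := by
    rw [dnS, Finset.card_insert_of_notMem hne1, Finset.card_erase_of_mem hkT]
    have : 1 ≤ T.card := Finset.card_pos.mpr ⟨k, hkT⟩
    omega
  have hsum' : ∑ i ∈ dnS T k, i + 1 = ∑ i ∈ T, i := by
    rw [dnS, Finset.sum_insert hne1, ← Finset.add_sum_erase _ _ hkT]
    have : 1 ≤ k := by omega
    omega
  refine ⟨?_, by omega, by omega⟩
  · intro x hx
    by_cases hxk : x = k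
    · subst hxk; simp only [mem_range]; omega
    · exact hsub (by rw [dnS]; exact Finset.mem_insert_of_mem (Finset.mem_erase.mpr ⟨hxk, hx⟩))

lemma suppIn_Eop {N m s : ℕ} {v : Finset ℕ → ℚ} (h : SuppIn (Amn N m (s + 1)) v) :
    SuppIn (Amn N m s) (Eop N v) := by
  intro T hT
  rw [Eop] at hT
  obtain ⟨k, hk, hne⟩ := Finset.exists_ne_zero_of_sum_ne_zero hT
  simp only [Finset.mem_filter] at hk
  obtain ⟨hkT, hk1T⟩ := hk
  obtain ⟨hsub, hcard, hsum⟩ := h _ (by intro h0; rw [h0, mul_zero] at hne; exact hne rfl)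
  have hne1 : k + 1 ∉ T.erase k := fun h => hk1T (Finset.mem_of_mem_erase h)
  have hcard' : (upS T k).card = T.card := by
    rw [upS, Finset.card_insert_of_notMem hne1, Finset.card_erase_of_mem hkT]
    have : 1 ≤ T.card := Finset.card_pos.mpr ⟨k, hkT⟩
    omega
  have hsum' : ∑ i ∈ upS T k, i = ∑ i ∈ T, i + 1 := by
    rw [upS, Finset.sum_insert hne1, ← Finset.add_sum_erase _ _ hkT]
    omega
  have hkN : k < N := by
    have : k + 1 ∈ upS T k := by rw [mem_upS]; exact Or.inl rfl
    have := hsub this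
    simp only [mem_range] at this
    omega
  refine ⟨?_, by omega, by omega⟩
  · intro x hx
    by_cases hxk : x = k
    · subst hxk; simp only [mem_range]; omega
    · exact hsub (by rw [mem_upS]; exact Or.inr ⟨hxk, hx⟩)

lemma wtc_eq {N m s : ℕ} {S : Finset ℕ} (h : Amn N m s S) :
    wtc N S = (m : ℚ) * ((N : ℚ) - 1) - 2 * (s : ℚ) := by
  obtain ⟨-, hcard, hsum⟩ := h
  rw [wtc, Finset.sum_sub_distrib]
  rw [Finset.sum_const, hcard]
  have : ∑ i ∈ S, (2 : ℚ) * (i : ℚ) = 2 * (s : ℚ) := by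
    rw [← Finset.mul_sum, ← hsum]
    push_cast [Nat.cast_sum]
    ring
  rw [this]
  push_cast
  ring

/-- The key sl₂ raising computation. -/
lemma EFiter (N m s : ℕ) (v : Finset ℕ → ℚ) (hv : SuppIn (Amn N m s) v)
    (hE : Eop N v = fun _ => 0) :
    ∀ k : ℕ, Eop N ((Fop N)^[k + 1] v) = fun T =>
      ((k : ℚ) + 1) * (((m : ℚ) * ((N : ℚ) - 1) - 2 * s) - k) * (Fop N)^[k] v T := by
  set w : ℚ := (m : ℚ) * ((N : ℚ) - 1) - 2 * (s : ℚ) with hw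
  have hsupp : ∀ k : ℕ, SuppIn (Amn N m (s + k)) ((Fop N)^[k] v) := by
    intro k
    induction k with
    | zero => simpa using hv
    | succ k ih =>
      rw [Function.iterate_succ_apply']
      have := suppIn_Fop ih
      rwa [show s + k + 1 = s + (k + 1) from by omega] at this
  intro k
  induction k with
  | zero =>
    funext T
    simp only [zero_add, Function.iterate_one, Function.iterate_zero, id_eq, Nat.cast_zero]
    by_cases hG : T ⊆ range N
    · have hc := commutator N v T hG
      rw [hE, Fop_zero] at hc
      simp only [sub_zero] at hc
      rw [hc]
      by_cases hvT : v T = 0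
      · rw [hvT]; ring
      · rw [wtc_eq (hv T hvT)]; ring
    · have h1 : Eop N (Fop N v) T = 0 := by
        by_contra hcon
        have := (suppIn_Eop (show SuppIn (Amn N m (s + 1)) (Fop N v) from suppIn_Fop hv)) T hcon
        exact hG this.1
      have h2 : v T = 0 := by
        by_contra hcon
        exact hG (hv T hcon).1
      rw [h1, h2]; ring
  | succ k ih =>
    funext T
    rw [Function.iterate_succ_apply']
    by_cases hG : T ⊆ range N
    · have hc := commutator N ((Fop N)^[k + 1] v) T hG
      rw [ih] at hc
      rw [show (Fop N (fun T => ((k : ℚ) + 1) * (w - k) * (Fop N)^[k] v T)) =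
        fun T => ((k : ℚ) + 1) * (w - k) * Fop N ((Fop N)^[k] v) T from
        funext fun T => Fop_smul N _ _ T] at hc
      rw [← Function.iterate_succ_apply' (Fop N) k v] at hc
      simp only [Nat.succ_eq_add_one] at hc
      have heq : Eop N (Fop N ((Fop N)^[k + 1] v)) T =
          ((k : ℚ) + 1) * (w - k) * (Fop N)^[k+1] v T + wtc N T * (Fop N)^[k+1] v T := by
        linarith [hc]
      rw [heq]
      by_cases hvT : (Fop N)^[k + 1] v T = 0
      · rw [hvT]; push_cast; ring
      · rw [wtc_eq (hsupp (k + 1) T hvT)]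
        push_cast
        ring
    · have h1 : Eop N (Fop N ((Fop N)^[k + 1] v)) T = 0 := by
        by_contra hcon
        have hs1 : SuppIn (Amn N m (s + (k + 2))) (Fop N ((Fop N)^[k+1] v)) := by
          have := suppIn_Fop (hsupp (k + 1))
          rwa [show s + (k + 1) + 1 = s + (k + 2) from by omega] at this
        have hs2 := suppIn_Eop (show SuppIn (Amn N m ((s + k + 1) + 1)) (Fop N ((Fop N)^[k+1] v))
          from by rwa [show (s + k + 1) + 1 = s + (k + 2) from by omega]) T hcon
        exact hG hs2.1
      have h2 : (Fop N)^[k + 1] v T = 0 := by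
        by_contra hcon
        exact hG (hsupp (k + 1) T hcon).1
      rw [h1, h2]; ring

lemma sum_le_NN {N : ℕ} {T : Finset ℕ} (h : T ⊆ range N) : ∑ i ∈ T, i ≤ N * N := by
  calc ∑ i ∈ T, i ≤ ∑ i ∈ range N, i := Finset.sum_le_sum_of_subset h
  _ ≤ ∑ _i ∈ range N, N := Finset.sum_le_sum fun i hi => by simp at hi; omega
  _ = N * N := by rw [Finset.sum_const, Finset.card_range]; ring

/-- E is injective on weight spaces of negative weight. -/
lemma Einj (N m s : ℕ) (hs : (m : ℚ) * ((N : ℚ) - 1) - 2 * (s : ℚ) < 0)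
    (v : Finset ℕ → ℚ) (hv : SuppIn (Amn N m s) v)
    (hE : Eop N v = fun _ => 0) : v = fun _ => 0 := by
  set w : ℚ := (m : ℚ) * ((N : ℚ) - 1) - 2 * (s : ℚ) with hw
  by_contra hvne
  have hsupp : ∀ k : ℕ, SuppIn (Amn N m (s + k)) ((Fop N)^[k] v) := by
    intro k
    induction k with
    | zero => simpa using hv
    | succ k ih =>
      rw [Function.iterate_succ_apply']
      have := suppIn_Fop ih
      rwa [show s + k + 1 = s + (k + 1) from by omega] at this
  have hne : ∀ k : ℕ, (Fop N)^[k] v ≠ fun _ => 0 := by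
    intro k
    induction k with
    | zero => simpa using hvne
    | succ k ih =>
      intro hcon
      apply ih
      have h1 := EFiter N m s v hv hE k
      rw [Function.iterate_succ_apply', ← Function.iterate_succ_apply' (Fop N) k v] at hcon
      rw [hcon, Eop_zero] at h1
      have hck : ((k : ℚ) + 1) * (w - k) ≠ 0 := by
        apply mul_ne_zero
        · positivity
        · have : (w : ℚ) - k < 0 := by
            have : (0 : ℚ) ≤ k := by positivity
            linarith
          linarith
      funext T
      have h2 : ((k : ℚ) + 1) * (w - (k : ℚ)) * ((Fop N)^[k] v T) = 0 :=
        (congrFun h1 T).symm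
      rcases mul_eq_zero.mp h2 with h | h
      · exact absurd h hck
      · exact h
  apply hne (N * N + 1)
  funext T
  by_contra hcon
  have hA := hsupp (N * N + 1) T hcon
  have h1 := sum_le_NN hA.1
  have h2 := hA.2.2
  omega

open Module in
lemma card_lev_le (N m s : ℕ) (hs : (m : ℚ) * ((N : ℚ) - 1) - 2 * (s : ℚ) < 0) (hs1 : 1 ≤ s) :
    (((range N).powersetCard m).filter (fun S => ∑ i ∈ S, i = s)).card ≤
    (((range N).powersetCard m).filter (fun S => ∑ i ∈ S, i = s - 1)).card := by
  classical
  set Sigs := ((range N).powersetCard m).filter (fun S => ∑ i ∈ S, i = s) with hSigs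
  set Sigt := ((range N).powersetCard m).filter (fun S => ∑ i ∈ S, i = s - 1) with hSigt
  have hmem1 : ∀ S : Finset ℕ, S ∈ Sigs ↔ Amn N m s S := by
    intro S
    rw [hSigs, Finset.mem_filter, Finset.mem_powersetCard, Amn, and_assoc]
  have hmem2 : ∀ S : Finset ℕ, S ∈ Sigt ↔ Amn N m (s - 1) S := by
    intro S
    rw [hSigt, Finset.mem_filter, Finset.mem_powersetCard, Amn, and_assoc]
  let ext : (↥Sigs → ℚ) → (Finset ℕ → ℚ) := fun f S => if h : S ∈ Sigs then f ⟨S, h⟩ else 0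
  have hAmn : ∀ f, SuppIn (Amn N m s) (ext f) := by
    intro f S hS
    by_cases h : S ∈ Sigs
    · exact (hmem1 S).mp h
    · exact absurd (dif_neg h) hS
  have hextadd : ∀ f g, ext (f + g) = fun S => ext f S + ext g S := by
    intro f g
    funext S
    by_cases h : S ∈ Sigs <;> simp [ext, h]
  have hextsmul : ∀ (c : ℚ) f, ext (c • f) = fun S => c * ext f S := by
    intro c f
    funext S
    by_cases h : S ∈ Sigs <;> simp [ext, h]
  let L : (↥Sigs → ℚ) →ₗ[ℚ] (↥Sigt → ℚ) :=
    { toFun := fun f T => Eop N (ext f) T.val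
      map_add' := by
        intro f g
        funext T
        show Eop N (ext (f + g)) T.val = Eop N (ext f) T.val + Eop N (ext g) T.val
        rw [hextadd f g, Eop_add]
      map_smul' := by
        intro c f
        funext T
        show Eop N (ext (c • f)) T.val = c * Eop N (ext f) T.val
        rw [hextsmul c f, Eop_smul] }
  have hinj : Function.Injective L := by
    rw [injective_iff_map_eq_zero]
    intro f hf
    have hEzero : Eop N (ext f) = fun _ => 0 := by
      funext T
      by_cases hT : T ∈ Sigt
      · exact congrFun hf ⟨T, hT⟩
      · by_contra hcon
        have hsupp : SuppIn (Amn N m ((s - 1) + 1)) (ext f) := by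
          rw [show s - 1 + 1 = s from by omega]
          exact hAmn f
        exact hT ((hmem2 T).mpr (suppIn_Eop hsupp T hcon))
    have hv0 := Einj N m s hs (ext f) (hAmn f) hEzero
    funext x
    have h0 := congrFun hv0 x.val
    show f x = 0
    have : ext f x.val = f x := dif_pos x.2
    rw [← this, h0]
  calc Sigs.card = Fintype.card ↥Sigs := (Fintype.card_coe _).symm
    _ = finrank ℚ (↥Sigs → ℚ) := (Module.finrank_fintype_fun_eq_card ℚ).symm
    _ ≤ finrank ℚ (↥Sigt → ℚ) := LinearMap.finrank_le_finrank_of_injective hinj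
    _ = Fintype.card ↥Sigt := Module.finrank_fintype_fun_eq_card ℚ
    _ = Sigt.card := Fintype.card_coe _


lemma coeff_anti (m n k : ℕ) (h2 : m * n < 2 * (k + 1)) :
    (Cpoly m n).coeff (k + 1) ≤ (Cpoly m n).coeff k := by
  rw [coeff_Cpoly, coeff_Cpoly]
  have hid : m * (m + n) = m * n + 2 * Tm m + m := by
    rcases m with - | m
    · simp [Tm]
    · rw [two_Tm (m + 1), Nat.add_sub_cancel]
      ring
  have hq : (m : ℚ) * (((m + n : ℕ) : ℚ) - 1) - 2 * ((k + 1 + Tm m : ℕ) : ℚ) < 0 := by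
    have hcast : (m : ℚ) * ((m : ℚ) + (n : ℚ)) =
        (m : ℚ) * (n : ℚ) + 2 * ((Tm m : ℕ) : ℚ) + (m : ℚ) := by
      exact_mod_cast congrArg (Nat.cast : ℕ → ℚ) hid
    have h2' : (m : ℚ) * (n : ℚ) < 2 * ((k : ℚ) + 1) := by exact_mod_cast h2
    push_cast
    push_cast at hcast
    nlinarith [hcast, h2']
  have hle := card_lev_le (m + n) m (k + 1 + Tm m) hq (by omega)
  rw [show k + 1 + Tm m - 1 = k + Tm m from by omega] at hle
  have : (lev m (m + n) (k + 1 + Tm m)).card ≤ (lev m (m + n) (k + Tm m)).card := by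
    simpa [lev] using hle
  exact_mod_cast this

/-- The Gaussian binomial coefficient `[m+n choose m]_q`
(the polynomial `C` with `C · [m]! [n]! = [m+n]!`) is a polynomial in `q` of degree
`mn` whose coefficient sequence is symmetric and unimodal. -/
theorem gaussian_binomial_symmetric_unimodal (m n : ℕ) :
    ∃ C : Polynomial ℤ,
      C * (qfact m * qfact n) = qfact (m + n) ∧
      C.natDegree = m * n ∧
      (∀ k ≤ m * n, C.coeff k = C.coeff (m * n - k)) ∧
      ∃ j : ℕ,
        (∀ k : ℕ, k + 1 ≤ j → C.coeff k ≤ C.coeff (k + 1)) ∧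
        (∀ k : ℕ, j ≤ k → k < m * n → C.coeff (k + 1) ≤ C.coeff k) := by
  refine ⟨Cpoly m n, Cpoly_mul_qfact m n, natDegree_Cpoly m n, ?_, ?_⟩
  · intro k hk
    exact coeff_symm m n k hk
  · refine ⟨m * n / 2, ?_, ?_⟩
    · intro k hk
      have h1 : (Cpoly m n).coeff k = (Cpoly m n).coeff (m * n - k) :=
        coeff_symm m n k (by omega)
      have h2 : (Cpoly m n).coeff (k + 1) = (Cpoly m n).coeff (m * n - (k + 1)) :=
        coeff_symm m n (k + 1) (by omega)
      have h3 : (Cpoly m n).coeff ((m * n - k - 1) + 1) ≤ (Cpoly m n).coeff (m * n - k - 1) :=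
        coeff_anti m n (m * n - k - 1) (by omega)
      rw [show m * n - k - 1 + 1 = m * n - k from by omega] at h3
      rw [h1, h2, show m * n - (k + 1) = m * n - k - 1 from by omega]
      exact h3
    · intro k hk1 hk2
      exact coeff_anti m n k (by omega)

end SepPerm
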